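/- Suppose t_∞ := lim_{n→∞} (l_1⋯l_n)/(r_1⋯r_n) exists and lies in (0,∞). Then for any non-decreasing sequence of stopping times (T_m)_{m≥1} with E[T_m] < ∞ for every m and T_m → T_∂ almost surely, the limit lim_{m→∞} E[X_{T_m}] exists and equals (1 + l_1/r_1 + ⋯ + (l_1⋯l_{k−1})/(r_1⋯r_{k−1})) / t_∞, i.e. x_k / t_∞. -/

import Mathlib

open MeasureTheory Filter Topology Finset
open scoped ENNReal NNReal Classical

/-- Partial products `t_n = (l_1 ⋯ l_n)/(r_1 ⋯ r_n)`, with `t_0 = 1`. -/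
noncomputable def tp (l r : ℕ → ℝ) (n : ℕ) : ℝ :=
  (∏ i ∈ Finset.Icc 1 n, l i) / (∏ i ∈ Finset.Icc 1 n, r i)

/-- `x_n = Σ_{i=0}^{n-1} t_i`. -/
noncomputable def xp (l r : ℕ → ℝ) (n : ℕ) : ℝ :=
  ∑ i ∈ Finset.range n, tp l r i

/-- The natural filtration of the process `X` (σ-algebra generated by `X_0, …, X_m`). -/
def natFilt {Ω : Type*} (X : ℕ → Ω → ℕ) (m : ℕ) : MeasurableSpace Ω :=
  ⨆ i ∈ Finset.range (m + 1), MeasurableSpace.comap (X i) ⊤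

/-- A birth–death chain on ℕ started at `k`, with up–probabilities `r n` and
down–probabilities `l n` for states `n ≥ 1`, and `0` absorbing.  The Markov
property is encoded by conditioning on arbitrary events of the natural filtration. -/
structure IsBDChain {Ω : Type*} [MeasurableSpace Ω] (P : Measure Ω)
    (X : ℕ → Ω → ℕ) (k : ℕ) (l r : ℕ → ℝ) : Prop where
  isProb : IsProbabilityMeasure P
  one_le_k : 1 ≤ k
  l_pos : ∀ n, 1 ≤ n → 0 < l n
  r_pos : ∀ n, 1 ≤ n → 0 < r n
  lr_one : ∀ n, 1 ≤ n → l n + r n = 1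
  meas : ∀ m, Measurable (X m)
  init : ∀ᵐ ω ∂P, X 0 ω = k
  absorb : ∀ᵐ ω ∂P, ∀ m, X m ω = 0 → X (m + 1) ω = 0
  step_up : ∀ m n, 1 ≤ n → ∀ A : Set Ω, MeasurableSet[natFilt X m] A →
    P (A ∩ {ω | X m ω = n ∧ X (m + 1) ω = n + 1}) =
      ENNReal.ofReal (r n) * P (A ∩ {ω | X m ω = n})
  step_down : ∀ m n, 1 ≤ n → ∀ A : Set Ω, MeasurableSet[natFilt X m] A →
    P (A ∩ {ω | X m ω = n ∧ X (m + 1) ω = n - 1}) =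
      ENNReal.ofReal (l n) * P (A ∩ {ω | X m ω = n})

/-- A (finite-valued) stopping time for the natural filtration of `X`. -/
def IsBDStop {Ω : Type*} (X : ℕ → Ω → ℕ) (T : Ω → ℕ) : Prop :=
  ∀ m, MeasurableSet[natFilt X m] {ω | T ω = m}

/-- An extended-ℕ-valued stopping time for the natural filtration of `X`. -/
def IsBDStopE {Ω : Type*} (X : ℕ → Ω → ℕ) (T : Ω → ℕ∞) : Prop :=
  ∀ m : ℕ, MeasurableSet[natFilt X m] {ω | T ω = (m : ℕ∞)}

/-- First hitting time of the set `S ⊆ ℕ` by the path `m ↦ X m ω`, valued in `ℕ∞`. -/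
noncomputable def hitTime {Ω : Type*} (X : ℕ → Ω → ℕ) (S : Set ℕ) (ω : Ω) : ℕ∞ :=
  sInf ((fun m : ℕ => (m : ℕ∞)) '' {m | X m ω ∈ S})

/-- `T_∂`: the first hitting time of `0`, with value `∞` if `0` is never hit. -/
noncomputable def hit0 {Ω : Type*} (X : ℕ → Ω → ℕ) (ω : Ω) : ℕ∞ :=
  hitTime X {0} ω

/-- `G_T^n`: the number of times `m` with `0 ≤ m ≤ T-1` and `X_m = n` (finite `T`). -/
def count {Ω : Type*} (X : ℕ → Ω → ℕ) (n : ℕ) (T : Ω → ℕ) (ω : Ω) : ℕ :=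
  ((Finset.range (T ω)).filter fun m => X m ω = n).card

/-- `G_τ^n` for an `ℕ∞`-valued time `τ`, valued in `ℝ≥0∞`. -/
noncomputable def countE {Ω : Type*} (X : ℕ → Ω → ℕ) (n : ℕ) (τ : Ω → ℕ∞) (ω : Ω) : ℝ≥0∞ :=
  ∑' m : ℕ, if (m : ℕ∞) < τ ω ∧ X m ω = n then 1 else 0


set_option linter.unusedSectionVars false
set_option linter.unusedVariables false
section AUX
set_option maxHeartbeats 1000000
set_option linter.unusedSectionVars false
set_option linter.unusedVariables false



section arith
variable {l r : ℕ → ℝ}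

lemma tp_pos (hl : ∀ n, 1 ≤ n → 0 < l n) (hr : ∀ n, 1 ≤ n → 0 < r n) (n : ℕ) :
    0 < tp l r n := by
  apply div_pos <;> exact Finset.prod_pos (fun i hi => by
    first
      | exact hl i (Finset.mem_Icc.1 hi).1
      | exact hr i (Finset.mem_Icc.1 hi).1)

lemma tp_zero : tp l r 0 = 1 := by simp [tp]

lemma tp_succ (hr : ∀ n, 1 ≤ n → 0 < r n) (n : ℕ) :
    tp l r (n + 1) * r (n + 1) = tp l r n * l (n + 1) := by
  have h1 : (1:ℕ) ≤ n + 1 := Nat.succ_le_succ (Nat.zero_le n)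
  have e1 : ∏ i ∈ Finset.Icc 1 (n+1), l i = (∏ i ∈ Finset.Icc 1 n, l i) * l (n+1) :=
    Finset.prod_Icc_succ_top h1 l
  have e2 : ∏ i ∈ Finset.Icc 1 (n+1), r i = (∏ i ∈ Finset.Icc 1 n, r i) * r (n+1) :=
    Finset.prod_Icc_succ_top h1 r
  have hrn : (0:ℝ) < ∏ i ∈ Finset.Icc 1 n, r i :=
    Finset.prod_pos (fun i hi => hr i (Finset.mem_Icc.1 hi).1)
  have hr1 : (0:ℝ) < r (n+1) := hr _ h1
  rw [tp, tp, e1, e2]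
  field_simp

lemma xp_succ (n : ℕ) : xp l r (n + 1) = xp l r n + tp l r n :=
  Finset.sum_range_succ _ n

lemma xp_nonneg (hl : ∀ n, 1 ≤ n → 0 < l n) (hr : ∀ n, 1 ≤ n → 0 < r n) (n : ℕ) :
    0 ≤ xp l r n :=
  Finset.sum_nonneg fun i _ => (tp_pos hl hr i).le

lemma xp_mono (hl : ∀ n, 1 ≤ n → 0 < l n) (hr : ∀ n, 1 ≤ n → 0 < r n) :
    Monotone (xp l r) := by
  apply monotone_nat_of_le_succ
  intro n; rw [xp_succ]; linarith [tp_pos hl hr n]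

lemma xp_step (hr : ∀ n, 1 ≤ n → 0 < r n) (hlr : ∀ n, 1 ≤ n → l n + r n = 1)
    (n : ℕ) (hn : 1 ≤ n) :
    r n * xp l r (n + 1) + l n * xp l r (n - 1) = xp l r n := by
  obtain ⟨j, rfl⟩ : ∃ j, n = j + 1 := ⟨n - 1, (Nat.succ_pred_eq_of_pos hn).symm⟩
  simp only [Nat.add_sub_cancel]
  have h2 : xp l r (j + 1 + 1) = xp l r (j+1) + tp l r (j+1) := xp_succ _
  have h3 : xp l r (j + 1) = xp l r j + tp l r j := xp_succ _
  have h4 := tp_succ (l := l) hr j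
  have h5 := hlr (j+1) (Nat.succ_le_succ (Nat.zero_le j))
  linear_combination (r (j+1)) * h2 - (l (j+1)) * h3 + h4 + (xp l r (j+1)) * h5
end arith

section bounds
variable {l r : ℕ → ℝ} {tinf : ℝ}

lemma seq_bounds (f : ℕ → ℝ) (a : ℝ) (ha : 0 < a) (hlim : Tendsto f atTop (nhds a))
    (hpos : ∀ n, 0 < f n) : ∃ c C : ℝ, 0 < c ∧ ∀ n, c ≤ f n ∧ f n ≤ C := by
  have h1 : ∀ᶠ n in atTop, f n ∈ Set.Ioo (a/2) (a+1) :=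
    hlim.eventually (Ioo_mem_nhds (by linarith) (by linarith))
  obtain ⟨N, hN⟩ := eventually_atTop.1 h1
  have hne : (Finset.range (N+1)).Nonempty := ⟨0, by simp⟩
  refine ⟨min ((Finset.range (N+1)).inf' hne f) (a/2),
          max ((Finset.range (N+1)).sup' hne f) (a+1), ?_, ?_⟩
  · apply lt_min
    · exact (Finset.lt_inf'_iff hne).2 fun b _ => hpos b
    · linarith
  · intro n
    rcases le_or_gt n N with h | h
    · constructor
      · exact le_trans (min_le_left _ _)
          (Finset.inf'_le f (Finset.mem_range.2 (Nat.lt_succ_of_le h)))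
      · exact le_trans (Finset.le_sup' f (Finset.mem_range.2 (Nat.lt_succ_of_le h)))
          (le_max_left _ _)
    · have := hN n h.le
      exact ⟨le_trans (min_le_right _ _) this.1.le,
             le_trans this.2.le (le_max_right _ _)⟩

lemma sum_approx (u : ℕ → ℝ) (ε : ℝ) (hε : 0 < ε) (hlim : Tendsto u atTop (nhds 0)) :
    ∃ B : ℝ, 0 ≤ B ∧ ∀ n, |∑ i ∈ Finset.range n, u i| ≤ B * (if 1 ≤ n then 1 else 0) + ε * n := by
  have h1 : ∀ᶠ n in atTop, |u n| < ε := by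
    have := hlim.eventually (eventually_abs_sub_lt 0 hε)
    simpa using this
  obtain ⟨N, hN⟩ := eventually_atTop.1 h1
  refine ⟨∑ i ∈ Finset.range N, |u i|, Finset.sum_nonneg fun i _ => abs_nonneg _, ?_⟩
  intro n
  rcases Nat.eq_zero_or_pos n with rfl | hn
  · simp
  have hn' : (if 1 ≤ n then (1:ℝ) else 0) = 1 := if_pos hn
  rw [hn', mul_one]
  calc |∑ i ∈ Finset.range n, u i| ≤ ∑ i ∈ Finset.range n, |u i| :=
        Finset.abs_sum_le_sum_abs _ _
    _ ≤ ∑ i ∈ Finset.range n, ((if i ∈ Finset.range N then |u i| else 0) + ε) := by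
        apply Finset.sum_le_sum
        intro i _
        by_cases hi : i ∈ Finset.range N
        · simp [hi, hε.le]
        · rw [if_neg hi]
          have : N ≤ i := le_of_not_gt (fun h => hi (Finset.mem_range.2 h))
          linarith [(hN i this)]
    _ = (∑ i ∈ Finset.range n, if i ∈ Finset.range N then |u i| else 0) + n * ε := by
        rw [Finset.sum_add_distrib]; simp [mul_comm]
    _ ≤ (∑ i ∈ Finset.range N, |u i|) + ε * n := by
        have : (∑ i ∈ Finset.range n, if i ∈ Finset.range N then |u i| else 0)
            ≤ ∑ i ∈ Finset.range N, |u i| := by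
          rw [← Finset.sum_filter]
          apply Finset.sum_le_sum_of_subset_of_nonneg
          · intro x hx; exact (Finset.mem_filter.1 hx).2
          · intro i _ _; exact abs_nonneg _
        linarith [this]
end bounds


section filt
variable {Ω : Type*} [MeasurableSpace Ω] {X : ℕ → Ω → ℕ}

lemma natFilt_le (hX : ∀ i, Measurable (X i)) (m : ℕ) : natFilt X m ≤ ‹MeasurableSpace Ω› := by
  apply iSup_le; intro i; apply iSup_le; intro _
  rintro s ⟨s', -, rfl⟩
  exact hX i (MeasurableSet.of_discrete (s := s'))

lemma natFilt_mono {m m' : ℕ} (h : m ≤ m') : natFilt X m ≤ natFilt X m' := by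
  apply iSup_le; intro i; apply iSup_le; intro hi
  exact le_iSup₂ (f := fun i (_ : i ∈ Finset.range (m' + 1)) => MeasurableSpace.comap (X i) ⊤)
    i (Finset.mem_range.2 (lt_of_lt_of_le (Finset.mem_range.1 hi) (by omega)))

lemma measSet_X {i m : ℕ} (him : i ≤ m) (s : Set ℕ) :
    MeasurableSet[natFilt X m] ((X i) ⁻¹' s) := by
  have h1 : MeasurableSpace.comap (X i) ⊤ ≤ natFilt X m :=
    le_iSup₂ (f := fun i (_ : i ∈ Finset.range (m + 1)) => MeasurableSpace.comap (X i) ⊤)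
      i (Finset.mem_range.2 (by omega))
  exact h1 _ ⟨s, trivial, rfl⟩

lemma measSet_X_eq {i m : ℕ} (him : i ≤ m) (n : ℕ) :
    MeasurableSet[natFilt X m] {ω | X i ω = n} :=
  measSet_X him {n}


lemma stop_eq_meas {T : Ω → ℕ} (hT : IsBDStop X T) {j m : ℕ} (hjm : j ≤ m) :
    MeasurableSet[natFilt X m] {ω | T ω = j} :=
  natFilt_mono hjm _ (hT j)

lemma stop_gt_meas {T : Ω → ℕ} (hT : IsBDStop X T) (m : ℕ) :
    MeasurableSet[natFilt X m] {ω | m < T ω} := by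
  have : {ω | m < T ω} = (⋃ j ∈ Finset.range (m+1), {ω | T ω = j})ᶜ := by
    ext ω; simp only [Set.mem_compl_iff, Set.mem_iUnion, Finset.mem_range, Set.mem_setOf_eq]
    constructor
    · rintro h ⟨j, hj, rfl⟩; omega
    · intro h; by_contra hc; exact h ⟨T ω, by omega, rfl⟩
  rw [this]
  exact (MeasurableSet.biUnion (Finset.range (m+1)).countable_toSet
    (fun j hj => stop_eq_meas hT (by simpa using Nat.lt_succ_iff.1 (Finset.mem_range.1 hj)))).compl

lemma meas_T (hX : ∀ i, Measurable (X i)) {T : Ω → ℕ} (hT : IsBDStop X T) : Measurable T := by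
  apply measurable_to_countable'
  intro j
  exact natFilt_le hX j _ (hT j)

lemma meas_X_T (hX : ∀ i, Measurable (X i)) {T : Ω → ℕ} (hT : Measurable T) :
    Measurable (fun ω => X (T ω) ω) := by
  apply measurable_to_countable'
  intro n
  have : (fun ω => X (T ω) ω) ⁻¹' {n} = ⋃ j, ({ω | T ω = j} ∩ (X j) ⁻¹' {n}) := by
    ext ω; simp only [Set.mem_preimage, Set.mem_singleton_iff, Set.mem_iUnion, Set.mem_inter_iff,
      Set.mem_setOf_eq]
    constructor
    · intro h; exact ⟨T ω, rfl, h⟩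
    · rintro ⟨j, rfl, h⟩; exact h
  rw [this]
  exact MeasurableSet.iUnion fun j => (hT (measurableSet_singleton j)).inter
    (hX j (measurableSet_singleton n))

lemma lint_comp_nat {P : Measure Ω} {Y : Ω → ℕ} (hY : Measurable Y) (g : ℕ → ℝ≥0∞)
    {A : Set Ω} (hA : MeasurableSet A) :
    ∫⁻ ω in A, g (Y ω) ∂P = ∑' n, g n * P (A ∩ Y ⁻¹' {n}) := by
  rw [← lintegral_map (f := g) (measurable_of_countable g) hY]
  rw [lintegral_countable' (μ := (P.restrict A).map Y)]
  congr 1; ext n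
  rw [Measure.map_apply hY (measurableSet_singleton n),
    Measure.restrict_apply (hY (measurableSet_singleton n)), Set.inter_comm]
end filt
section chain
variable {Ω : Type*} [MeasurableSpace Ω] {P : Measure Ω} {X : ℕ → Ω → ℕ} {k : ℕ} {l r : ℕ → ℝ}


lemma meas_partition (P : Measure Ω) {Y : Ω → ℕ} (hY : Measurable Y) {B : Set Ω}
    (hB : MeasurableSet B) : P B = ∑' n, P (B ∩ Y ⁻¹' {n}) := by
  rw [← measure_iUnion]
  · congr 1; ext ω; simp
  · intro i j hij
    simp only [Set.disjoint_left]
    rintro ω ⟨-, h1⟩ ⟨-, h2⟩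
    exact hij (h1.symm.trans h2)
  · exact fun n => hB.inter (hY (measurableSet_singleton n))

lemma one_step (hC : IsBDChain P X k l r) (m : ℕ) {A : Set Ω}
    (hA : MeasurableSet[natFilt X m] A) :
    ∫⁻ ω in A, ENNReal.ofReal (xp l r (X (m+1) ω)) ∂P
      = ∫⁻ ω in A, ENNReal.ofReal (xp l r (X m ω)) ∂P := by
  have hprob := hC.isProb
  set g : ℕ → ℝ≥0∞ := fun n => ENNReal.ofReal (xp l r n) with hg
  have hA' : MeasurableSet A := natFilt_le hC.meas m A hA
  set q : ℕ → ℕ → ℝ≥0∞ := fun n j => P (A ∩ (X m) ⁻¹' {n} ∩ (X (m+1)) ⁻¹' {j}) with hq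
  set a : ℕ → ℝ≥0∞ := fun n => P (A ∩ (X m) ⁻¹' {n}) with ha
  have ha_fin : ∀ n, a n < ⊤ := fun n => lt_of_le_of_lt (measure_mono (Set.inter_subset_left))
    (lt_of_le_of_lt prob_le_one (by norm_num))
  -- rewriting of the events used in step_up/step_down
  have hset : ∀ n j : ℕ, A ∩ {ω | X m ω = n ∧ X (m+1) ω = j} = A ∩ (X m) ⁻¹' {n} ∩ (X (m+1)) ⁻¹' {j} := by
    intro n j; ext ω
    simp only [Set.mem_inter_iff, Set.mem_setOf_eq, Set.mem_preimage, Set.mem_singleton_iff]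
    tauto
  have hsetn : ∀ n : ℕ, A ∩ {ω | X m ω = n} = A ∩ (X m) ⁻¹' {n} := by
    intro n; ext ω
    simp only [Set.mem_inter_iff, Set.mem_setOf_eq, Set.mem_preimage, Set.mem_singleton_iff]
  have hup : ∀ n, 1 ≤ n → q n (n+1) = ENNReal.ofReal (r n) * a n := by
    intro n hn
    show P (A ∩ (X m) ⁻¹' {n} ∩ (X (m+1)) ⁻¹' {n+1}) = ENNReal.ofReal (r n) * P (A ∩ (X m) ⁻¹' {n})
    rw [← hset, ← hsetn]
    exact hC.step_up m n hn A hA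
  have hdn : ∀ n, 1 ≤ n → q n (n-1) = ENNReal.ofReal (l n) * a n := by
    intro n hn
    show P (A ∩ (X m) ⁻¹' {n} ∩ (X (m+1)) ⁻¹' {n-1}) = ENNReal.ofReal (l n) * P (A ∩ (X m) ⁻¹' {n})
    rw [← hset, ← hsetn]
    exact hC.step_down m n hn A hA
  have hqsum : ∀ n, ∑' j, q n j = a n := by
    intro n
    show (∑' j, P (A ∩ (X m) ⁻¹' {n} ∩ (X (m+1)) ⁻¹' {j})) = P (A ∩ (X m) ⁻¹' {n})
    exact (meas_partition P (hC.meas (m+1))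
      (hA'.inter (hC.meas m (measurableSet_singleton n)))).symm
  have hsum2 : ∀ n, 1 ≤ n → q n (n+1) + q n (n-1) = a n := by
    intro n hn
    rw [hup n hn, hdn n hn, ← add_mul, ← ENNReal.ofReal_add (hC.r_pos n hn).le (hC.l_pos n hn).le]
    rw [show r n + l n = 1 by linarith [hC.lr_one n hn]]
    simp
  have hzero : ∀ n, 1 ≤ n → ∀ j, j ≠ n+1 → j ≠ n-1 → q n j = 0 := by
    intro n hn j hj1 hj2
    by_contra hne
    have hdisj : (n+1) ≠ (n-1) := by omega
    have h := ENNReal.sum_le_tsum (f := q n) ({n+1, n-1, j} : Finset ℕ)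
    rw [Finset.sum_insert (by simp [hdisj, hj1.symm]),
      Finset.sum_insert (by simp [hj2.symm]), Finset.sum_singleton, hqsum] at h
    have hle : a n + q n j ≤ a n := by
      calc a n + q n j = q n (n+1) + q n (n-1) + q n j := by rw [hsum2 n hn]
        _ = q n (n+1) + (q n (n-1) + q n j) := by rw [add_assoc]
        _ ≤ a n := h
    exact absurd hle (not_le.2 (ENNReal.lt_add_right (ha_fin n).ne hne))
  have hzero0 : ∀ j, j ≠ 0 → q 0 j = 0 := by
    intro j hj
    have hnull : P {ω | ¬ ∀ m', X m' ω = 0 → X (m'+1) ω = 0} = 0 := by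
      have := hC.absorb
      rwa [MeasureTheory.ae_iff] at this
    apply measure_mono_null _ hnull
    rintro ω ⟨⟨-, h1⟩, h2⟩
    simp only [Set.mem_preimage, Set.mem_singleton_iff] at h1 h2
    intro hall
    exact hj (h2 ▸ hall m h1)
  -- main computation
  have key : ∀ n, ∑' j, g j * q n j = g n * a n := by
    intro n
    rcases Nat.eq_zero_or_pos n with rfl | hn
    · have h0 : g 0 = 0 := by simp [hg, xp]
      rw [h0, zero_mul]
      apply ENNReal.tsum_eq_zero.2
      intro j
      rcases eq_or_ne j 0 with rfl | hj
      · rw [h0, zero_mul]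
      · rw [hzero0 j hj, mul_zero]
    · have hdisj : (n+1) ≠ (n-1) := by omega
      rw [tsum_eq_sum (s := ({n+1, n-1} : Finset ℕ))
        (fun j hj => by
          rw [hzero n hn j (fun h => hj (by simp [h])) (fun h => hj (by simp [h])), mul_zero])]
      rw [Finset.sum_insert (by simp [hdisj]), Finset.sum_singleton]
      rw [hup n hn, hdn n hn, ← mul_assoc, ← mul_assoc, hg]
      have e1 : ENNReal.ofReal (xp l r (n+1)) * ENNReal.ofReal (r n)
          = ENNReal.ofReal (r n * xp l r (n+1)) := by
        rw [← ENNReal.ofReal_mul (xp_nonneg hC.l_pos hC.r_pos _),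
          mul_comm (xp l r (n+1)) (r n)]
      have e2 : ENNReal.ofReal (xp l r (n-1)) * ENNReal.ofReal (l n)
          = ENNReal.ofReal (l n * xp l r (n-1)) := by
        rw [← ENNReal.ofReal_mul (xp_nonneg hC.l_pos hC.r_pos _),
          mul_comm (xp l r (n-1)) (l n)]
      rw [e1, e2, ← add_mul, ← ENNReal.ofReal_add
        (mul_nonneg (hC.r_pos n hn).le (xp_nonneg hC.l_pos hC.r_pos _))
        (mul_nonneg (hC.l_pos n hn).le (xp_nonneg hC.l_pos hC.r_pos _))]
      rw [xp_step hC.r_pos hC.lr_one n hn]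
  calc ∫⁻ ω in A, ENNReal.ofReal (xp l r (X (m+1) ω)) ∂P
      = ∑' j, g j * P (A ∩ (X (m+1)) ⁻¹' {j}) := lint_comp_nat (hC.meas (m+1)) g hA'
    _ = ∑' j, g j * ∑' n, q n j := by
        apply tsum_congr; intro j
        congr 1
        rw [meas_partition P (hC.meas m) (hA'.inter (hC.meas (m+1) (measurableSet_singleton j)))]
        apply tsum_congr; intro n
        show P (A ∩ (X (m+1)) ⁻¹' {j} ∩ (X m) ⁻¹' {n}) = P (A ∩ (X m) ⁻¹' {n} ∩ (X (m+1)) ⁻¹' {j})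
        rw [Set.inter_right_comm]
    _ = ∑' j, ∑' n, g j * q n j := by
        apply tsum_congr; intro j; rw [ENNReal.tsum_mul_left]
    _ = ∑' n, ∑' j, g j * q n j := ENNReal.tsum_comm
    _ = ∑' n, g n * a n := tsum_congr key
    _ = ∫⁻ ω in A, ENNReal.ofReal (xp l r (X m ω)) ∂P := (lint_comp_nat (hC.meas m) g hA').symm
end chain
section ost
variable {Ω : Type*} [MeasurableSpace Ω] {P : Measure Ω} {X : ℕ → Ω → ℕ} {k : ℕ} {l r : ℕ → ℝ}

lemma ost_fix (hC : IsBDChain P X k l r) {S : Ω → ℕ} (hS : IsBDStop X S) (m : ℕ) :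
    ∫⁻ ω, ENNReal.ofReal (xp l r (X (min (S ω) m) ω)) ∂P = ENNReal.ofReal (xp l r k) := by
  have hprob := hC.isProb
  induction m with
  | zero =>
    have : ∀ᵐ ω ∂P, ENNReal.ofReal (xp l r (X (min (S ω) 0) ω)) = ENNReal.ofReal (xp l r k) := by
      filter_upwards [hC.init] with ω h0
      simp [h0]
    rw [lintegral_congr_ae this, lintegral_const, measure_univ, mul_one]
  | succ m ih =>
    rw [← ih]
    set A := {ω | m < S ω} with hA
    have hAf : MeasurableSet[natFilt X m] A := stop_gt_meas hS m
    have hA' : MeasurableSet A := natFilt_le hC.meas m A hAf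
    rw [← lintegral_add_compl (fun ω => ENNReal.ofReal (xp l r (X (min (S ω) (m+1)) ω))) hA',
        ← lintegral_add_compl (fun ω => ENNReal.ofReal (xp l r (X (min (S ω) m) ω))) hA']
    congr 1
    · -- on A : min (S ω) (m+1) = m+1, min (S ω) m = m
      have e1 : ∫⁻ ω in A, ENNReal.ofReal (xp l r (X (min (S ω) (m+1)) ω)) ∂P
          = ∫⁻ ω in A, ENNReal.ofReal (xp l r (X (m+1) ω)) ∂P := by
        apply setLIntegral_congr_fun hA'
        intro ω hω
        have : min (S ω) (m+1) = m+1 := min_eq_right (by exact hω)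
        dsimp only; rw [this]
      have e2 : ∫⁻ ω in A, ENNReal.ofReal (xp l r (X (min (S ω) m) ω)) ∂P
          = ∫⁻ ω in A, ENNReal.ofReal (xp l r (X m ω)) ∂P := by
        apply setLIntegral_congr_fun hA'
        intro ω hω
        have : min (S ω) m = m := min_eq_right (le_of_lt hω)
        dsimp only; rw [this]
      rw [e1, e2]
      exact one_step hC m hAf
    · apply setLIntegral_congr_fun hA'.compl
      intro ω hω
      have hle : S ω ≤ m := not_lt.1 hω
      dsimp only; rw [min_eq_left hle, min_eq_left (le_trans hle (Nat.le_succ m))]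

lemma step_pm_null (hC : IsBDChain P X k l r) (m n : ℕ) (hn : 1 ≤ n) :
    P {ω | X m ω = n ∧ ¬(X (m+1) ω = n+1 ∨ X (m+1) ω = n-1)} = 0 := by
  have hprob := hC.isProb
  have hup := hC.step_up m n hn Set.univ MeasurableSet.univ
  have hdn := hC.step_down m n hn Set.univ MeasurableSet.univ
  simp only [Set.univ_inter] at hup hdn
  set E := {ω | X m ω = n} with hE
  set U := {ω | X m ω = n ∧ X (m+1) ω = n+1} with hU
  set D := {ω | X m ω = n ∧ X (m+1) ω = n-1} with hD
  have hEm : MeasurableSet E := hC.meas m (measurableSet_singleton n)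
  have hUm : MeasurableSet U := by
    have : U = (X m) ⁻¹' {n} ∩ (X (m+1)) ⁻¹' {n+1} := by
      ext ω; simp [hU]
    rw [this]
    exact (hC.meas m (measurableSet_singleton n)).inter (hC.meas (m+1) (measurableSet_singleton _))
  have hDm : MeasurableSet D := by
    have : D = (X m) ⁻¹' {n} ∩ (X (m+1)) ⁻¹' {n-1} := by
      ext ω; simp [hD]
    rw [this]
    exact (hC.meas m (measurableSet_singleton n)).inter (hC.meas (m+1) (measurableSet_singleton _))
  have hdisj : Disjoint U D := by
    rw [Set.disjoint_left]
    rintro ω ⟨-, h1⟩ ⟨-, h2⟩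
    rw [h1] at h2; omega
  have hsub : U ∪ D ⊆ E := by
    rintro ω (⟨h, -⟩ | ⟨h, -⟩) <;> exact h
  have hUD : P (U ∪ D) = P E := by
    rw [measure_union hdisj hDm, hup, hdn, ← add_mul,
      ← ENNReal.ofReal_add (hC.r_pos n hn).le (hC.l_pos n hn).le,
      show r n + l n = 1 by linarith [hC.lr_one n hn]]
    simp
  have heq : {ω | X m ω = n ∧ ¬(X (m+1) ω = n+1 ∨ X (m+1) ω = n-1)} = E \ (U ∪ D) := by
    ext ω
    simp only [hE, hU, hD, Set.mem_setOf_eq, Set.mem_diff, Set.mem_union]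
    tauto
  rw [heq, measure_diff hsub (hUm.union hDm).nullMeasurableSet
    (lt_of_le_of_lt (measure_mono hsub) (measure_lt_top P E)).ne, hUD, tsub_self]

lemma path_bound (hC : IsBDChain P X k l r) :
    ∀ᵐ ω ∂P, ∀ m, X m ω ≤ k + m := by
  have h1 : ∀ᵐ ω ∂P, ∀ m n, 1 ≤ n →
      ¬(X m ω = n ∧ ¬(X (m+1) ω = n+1 ∨ X (m+1) ω = n-1)) := by
    rw [ae_all_iff]
    intro m
    rw [ae_all_iff]
    intro n
    rcases Nat.eq_zero_or_pos n with rfl | hn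
    · apply ae_of_all; intro ω h; omega
    · have := step_pm_null hC m n hn
      filter_upwards [measure_eq_zero_iff_ae_notMem.1 this] with ω hω
      intro _
      exact hω
  filter_upwards [h1, hC.init, hC.absorb] with ω hstep h0 habs
  intro m
  induction m with
  | zero => omega
  | succ m ih =>
    rcases Nat.eq_zero_or_pos (X m ω) with h | h
    · rw [habs m h]; omega
    · have := hstep m (X m ω) h
      push_neg at this
      have h2 := this rfl
      rcases h2 with h2 | h2 <;> omega
end ost
section ost2
variable {Ω : Type*} [MeasurableSpace Ω] {P : Measure Ω} {X : ℕ → Ω → ℕ} {k : ℕ} {l r : ℕ → ℝ}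

lemma xp_le_mul {C : ℝ} (hCb : ∀ i, tp l r i ≤ C) (n : ℕ) : xp l r n ≤ C * n := by
  calc xp l r n ≤ ∑ _i ∈ Finset.range n, C := Finset.sum_le_sum fun i _ => hCb i
    _ = C * n := by rw [Finset.sum_const, Finset.card_range, nsmul_eq_mul, mul_comm]

lemma ofReal_xp_le (hl : ∀ n, 1 ≤ n → 0 < l n) (hr : ∀ n, 1 ≤ n → 0 < r n)
    {C : ℝ} (hCb : ∀ i, tp l r i ≤ C) (n : ℕ) :
    ENNReal.ofReal (xp l r n) ≤ ENNReal.ofReal C * n := by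
  have hC0 : 0 ≤ C := le_trans (tp_pos hl hr 0).le (hCb 0)
  calc ENNReal.ofReal (xp l r n) ≤ ENNReal.ofReal (C * n) :=
        ENNReal.ofReal_le_ofReal (xp_le_mul hCb n)
    _ = ENNReal.ofReal C * ENNReal.ofReal (n : ℝ) := ENNReal.ofReal_mul hC0
    _ = ENNReal.ofReal C * n := by rw [ENNReal.ofReal_natCast]

lemma ost (hC : IsBDChain P X k l r) {S : Ω → ℕ} (hS : IsBDStop X S)
    (hSint : ∫⁻ ω, (S ω : ℝ≥0∞) ∂P ≠ ⊤) {C : ℝ} (hCb : ∀ i, tp l r i ≤ C) :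
    ∫⁻ ω, ENNReal.ofReal (xp l r (X (S ω) ω)) ∂P = ENNReal.ofReal (xp l r k) := by
  have hprob := hC.isProb
  have hST : Measurable S := meas_T hC.meas hS
  have hSm : ∀ m : ℕ, Measurable fun ω => min (S ω) m := fun m =>
    (measurable_of_countable (fun j => min j m)).comp hST
  have hSE : Measurable fun ω => (S ω : ℝ≥0∞) :=
    (measurable_of_countable (fun j : ℕ => (j : ℝ≥0∞))).comp hST
  have hmeasF : ∀ m, Measurable fun ω => ENNReal.ofReal (xp l r (X (min (S ω) m) ω)) := fun m =>
    (measurable_of_countable (fun n => ENNReal.ofReal (xp l r n))).comp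
      (meas_X_T hC.meas (hSm m))
  have key := tendsto_lintegral_of_dominated_convergence
    (μ := P)
    (F := fun m ω => ENNReal.ofReal (xp l r (X (min (S ω) m) ω)))
    (f := fun ω => ENNReal.ofReal (xp l r (X (S ω) ω)))
    (bound := fun ω => ENNReal.ofReal C * ((k : ℝ≥0∞) + (S ω : ℝ≥0∞)))
    hmeasF
    (by
      intro m
      filter_upwards [path_bound hC] with ω hpb
      calc ENNReal.ofReal (xp l r (X (min (S ω) m) ω))
          ≤ ENNReal.ofReal C * (X (min (S ω) m) ω : ℝ≥0∞) :=
            ofReal_xp_le hC.l_pos hC.r_pos hCb _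
        _ ≤ ENNReal.ofReal C * ((k : ℝ≥0∞) + (S ω : ℝ≥0∞)) := by
            apply mul_le_mul_right
            have h1 : X (min (S ω) m) ω ≤ k + S ω := le_trans (hpb (min (S ω) m))
              (by omega)
            calc (X (min (S ω) m) ω : ℝ≥0∞) ≤ ((k + S ω : ℕ) : ℝ≥0∞) := Nat.cast_le.2 h1
              _ = (k : ℝ≥0∞) + (S ω : ℝ≥0∞) := by rw [Nat.cast_add])
    (by
      rw [lintegral_const_mul _ (f := fun ω => (k : ℝ≥0∞) + (S ω : ℝ≥0∞)) (measurable_const.add hSE),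
        lintegral_add_left measurable_const, lintegral_const, measure_univ, mul_one]
      exact ENNReal.mul_ne_top ENNReal.ofReal_ne_top
        (ENNReal.add_ne_top.2 ⟨ENNReal.natCast_ne_top k, hSint⟩))
    (by
      apply ae_of_all
      intro ω
      apply tendsto_atTop_of_eventually_const (i₀ := S ω)
      intro m hm
      show ENNReal.ofReal (xp l r (X (min (S ω) m) ω)) = _
      rw [min_eq_left hm])
  have heq : (fun m => ∫⁻ ω, ENNReal.ofReal (xp l r (X (min (S ω) m) ω)) ∂P)
      = fun _ => ENNReal.ofReal (xp l r k) := funext fun m => ost_fix hC hS m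
  rw [heq] at key
  exact (tendsto_nhds_unique tendsto_const_nhds key).symm
end ost2
section gambler
variable {Ω : Type*} [MeasurableSpace Ω] {P : Measure Ω} {X : ℕ → Ω → ℕ} {k : ℕ} {l r : ℕ → ℝ}

/-- truncated hitting time of `[b, ∞)` : `min(σ_b, M)`. -/
noncomputable def sbT (X : ℕ → Ω → ℕ) (b M : ℕ) (ω : Ω) : ℕ :=
  Nat.find (⟨M, Or.inl rfl⟩ : ∃ j, j = M ∨ b ≤ X j ω)

lemma sbT_le (b M : ℕ) (ω : Ω) : sbT X b M ω ≤ M := Nat.find_le (Or.inl rfl)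

lemma sbT_stop (b M : ℕ) : IsBDStop X (sbT X b M) := by
  intro j
  have : {ω | sbT X b M ω = j}
      = ({ω | j = M ∨ b ≤ X j ω} ∩ ⋂ i ∈ Finset.range j, {ω | ¬(i = M ∨ b ≤ X i ω)}) := by
    ext ω
    simp only [Set.mem_setOf_eq, Set.mem_inter_iff, Set.mem_iInter, Finset.mem_range, sbT]
    rw [Nat.find_eq_iff]
  rw [this]
  apply MeasurableSet.inter
  · by_cases h : j = M
    · have he : {ω : Ω | j = M ∨ b ≤ X j ω} = Set.univ := by
        ext ω; simp [h]
      rw [he]; exact @MeasurableSet.univ Ω (natFilt X j)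
    · have he : {ω : Ω | j = M ∨ b ≤ X j ω} = (X j) ⁻¹' (Set.Ici b) := by
        ext ω; simp [h]
      rw [he]; exact measSet_X le_rfl _
  · apply MeasurableSet.biInter (Finset.range j).countable_toSet
    intro i hi
    have hij : i ≤ j := le_of_lt (Finset.mem_range.1 hi)
    by_cases h : i = M
    · have he : {ω : Ω | ¬(i = M ∨ b ≤ X i ω)} = ∅ := by
        ext ω; simp [h]
      rw [he]; exact @MeasurableSet.empty Ω (natFilt X j)
    · have he : {ω : Ω | ¬(i = M ∨ b ≤ X i ω)} = ((X i) ⁻¹' (Set.Ici b))ᶜ := by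
        ext ω; simp [h]
      rw [he]; exact (measSet_X hij _).compl

lemma sbT_hit {b M : ℕ} {ω : Ω} (h : ∃ j ≤ M, b ≤ X j ω) : b ≤ X (sbT X b M ω) ω := by
  obtain ⟨j, hjM, hj⟩ := h
  have hfind := Nat.find_spec (⟨M, Or.inl rfl⟩ : ∃ j, j = M ∨ b ≤ X j ω)
  rcases hfind with h1 | h1
  · have h1' : sbT X b M ω = M := h1
    have hle : sbT X b M ω ≤ j := Nat.find_le (Or.inr hj)
    have hje : j = sbT X b M ω := by omega
    rwa [← hje]
  · exact h1

lemma gambler_bound (hC : IsBDChain P X k l r) {C : ℝ} (hCb : ∀ i, tp l r i ≤ C) (b : ℕ) :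
    ENNReal.ofReal (xp l r b) * P {ω | ∃ j, b ≤ X j ω} ≤ ENNReal.ofReal (xp l r k) := by
  have hprob := hC.isProb
  have hmeasE : ∀ M : ℕ, MeasurableSet {ω | ∃ j ≤ M, b ≤ X j ω} := by
    intro M
    have : {ω | ∃ j ≤ M, b ≤ X j ω} = ⋃ j ∈ Finset.range (M+1), (X j) ⁻¹' (Set.Ici b) := by
      ext ω
      simp only [Set.mem_setOf_eq, Set.mem_iUnion, Finset.mem_range, Set.mem_preimage,
        Set.mem_Ici]
      constructor
      · rintro ⟨j, h1, h2⟩; exact ⟨j, by omega, h2⟩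
      · rintro ⟨j, h1, h2⟩; exact ⟨j, by omega, h2⟩
    rw [this]
    exact MeasurableSet.biUnion (Finset.range (M+1)).countable_toSet
      (fun j _ => hC.meas j measurableSet_Ici)
  -- for each truncation level M
  have hM : ∀ M : ℕ, ENNReal.ofReal (xp l r b) * P {ω | ∃ j ≤ M, b ≤ X j ω}
      ≤ ENNReal.ofReal (xp l r k) := by
    intro M
    have hint : ∫⁻ ω, (sbT X b M ω : ℝ≥0∞) ∂P ≠ ⊤ := by
      apply ne_top_of_le_ne_top (b := (M : ℝ≥0∞))
      · exact ENNReal.natCast_ne_top M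
      · calc ∫⁻ ω, (sbT X b M ω : ℝ≥0∞) ∂P ≤ ∫⁻ _, (M : ℝ≥0∞) ∂P :=
              lintegral_mono fun ω => Nat.cast_le.2 (sbT_le b M ω)
          _ = M := by rw [lintegral_const, measure_univ, mul_one]
    have host := ost hC (sbT_stop b M) hint hCb
    calc ENNReal.ofReal (xp l r b) * P {ω | ∃ j ≤ M, b ≤ X j ω}
        = ∫⁻ ω in {ω | ∃ j ≤ M, b ≤ X j ω}, ENNReal.ofReal (xp l r b) ∂P := by
          rw [setLIntegral_const]
      _ ≤ ∫⁻ ω in {ω | ∃ j ≤ M, b ≤ X j ω},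
            ENNReal.ofReal (xp l r (X (sbT X b M ω) ω)) ∂P := by
          have hmS : Measurable (sbT X b M) := meas_T hC.meas (sbT_stop b M)
          have hmeasg : Measurable fun ω => ENNReal.ofReal (xp l r (X (sbT X b M ω) ω)) :=
            (measurable_of_countable (fun n => ENNReal.ofReal (xp l r n))).comp
              (meas_X_T hC.meas hmS)
          apply setLIntegral_mono_ae hmeasg.aemeasurable
          apply ae_of_all
          intro ω hω
          exact ENNReal.ofReal_le_ofReal
            (xp_mono hC.l_pos hC.r_pos (sbT_hit hω))
      _ ≤ ∫⁻ ω, ENNReal.ofReal (xp l r (X (sbT X b M ω) ω)) ∂P :=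
          setLIntegral_le_lintegral _ _
      _ = ENNReal.ofReal (xp l r k) := host
  -- pass to the union over M
  have hU : {ω | ∃ j, b ≤ X j ω} = ⋃ M : ℕ, {ω | ∃ j ≤ M, b ≤ X j ω} := by
    ext ω
    simp only [Set.mem_setOf_eq, Set.mem_iUnion]
    constructor
    · rintro ⟨j, hj⟩; exact ⟨j, j, le_rfl, hj⟩
    · rintro ⟨M, j, -, hj⟩; exact ⟨j, hj⟩
  have hmon : Monotone (fun M => {ω | ∃ j ≤ M, b ≤ X j ω}) := by
    intro M M' hMM' ω
    simp only [Set.mem_setOf_eq]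
    rintro ⟨j, h1, h2⟩
    exact ⟨j, le_trans h1 hMM', h2⟩
  rw [hU, hmon.directed_le.measure_iUnion, ENNReal.mul_iSup]
  exact iSup_le hM
end gambler
section confine
variable {Ω : Type*} [MeasurableSpace Ω] {P : Measure Ω} {X : ℕ → Ω → ℕ} {k : ℕ} {l r : ℕ → ℝ}

lemma up_run (hC : IsBDChain P X k l r) (m n : ℕ) (hn : 1 ≤ n) {A : Set Ω}
    (hA : MeasurableSet[natFilt X m] A) (hAn : A ⊆ {ω | X m ω = n}) (j : ℕ) :
    P (A ∩ ⋂ i ∈ Finset.range (j+1), {ω | X (m+i) ω = n+i})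
      = (∏ i ∈ Finset.range j, ENNReal.ofReal (r (n+i))) * P A := by
  induction j with
  | zero =>
    have he : A ∩ ⋂ i ∈ Finset.range 1, {ω | X (m+i) ω = n+i} = A := by
      ext ω
      simp only [Set.mem_inter_iff, Set.mem_iInter, Finset.mem_range, Nat.lt_one_iff]
      constructor
      · rintro ⟨h1, -⟩; exact h1
      · intro h1
        refine ⟨h1, fun i hi => ?_⟩
        subst hi
        have := hAn h1
        simp only [Set.mem_setOf_eq] at this
        simp only [Set.mem_setOf_eq, Nat.add_zero]
        exact this
    rw [he]; simp
  | succ j ih =>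
    set E : ℕ → Set Ω := fun j' => ⋂ i ∈ Finset.range (j'+1), {ω | X (m+i) ω = n+i} with hE
    have hEsub : A ∩ E j ⊆ {ω | X (m+j) ω = n+j} := by
      rintro ω ⟨-, h2⟩
      simp only [hE, Set.mem_iInter, Finset.mem_range] at h2
      exact h2 j (by omega)
    have hmeasB : MeasurableSet[natFilt X (m+j)] (A ∩ E j) := by
      apply MeasurableSet.inter
      · exact natFilt_mono (by omega) _ hA
      · apply MeasurableSet.biInter (Finset.range (j+1)).countable_toSet
        intro i hi
        have hij : i < j + 1 := Finset.mem_range.1 hi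
        exact measSet_X_eq (by omega : m + i ≤ m + j) _
    have hstep := hC.step_up (m+j) (n+j) (by omega) (A ∩ E j) hmeasB
    have hr1 : (A ∩ E j) ∩ {ω | X (m+j) ω = n+j} = A ∩ E j := by
      rw [Set.inter_eq_left.2 hEsub]
    have hr2 : (A ∩ E j) ∩ {ω | X (m+j) ω = n+j ∧ X (m+j+1) ω = n+j+1} = A ∩ E (j+1) := by
      ext ω
      simp only [hE, Set.mem_inter_iff, Set.mem_iInter, Finset.mem_range, Set.mem_setOf_eq]
      constructor
      · rintro ⟨⟨h1, h2⟩, h3, h4⟩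
        refine ⟨h1, fun i hi => ?_⟩
        rcases Nat.lt_or_ge i (j+1) with h | h
        · exact h2 i h
        · have : i = j + 1 := by omega
          subst this
          rw [show m + (j+1) = m + j + 1 from rfl, h4]
          omega
      · rintro ⟨h1, h2⟩
        refine ⟨⟨h1, fun i hi => h2 i (by omega)⟩, h2 j (by omega), ?_⟩
        rw [show m + j + 1 = m + (j+1) from rfl]
        rw [h2 (j+1) (by omega)]
        omega
    rw [hr1, hr2] at hstep
    show P (A ∩ E (j+1)) = _
    rw [hstep, ih, Finset.prod_range_succ]
    ring

/-- confinement event up to time `J` -/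
def stayE (X : ℕ → Ω → ℕ) (b J : ℕ) : Set Ω :=
  ⋂ i ∈ Finset.range (J+1), {ω | 1 ≤ X i ω ∧ X i ω < b}

lemma stayE_meas (b J : ℕ) : MeasurableSet[natFilt X J] (stayE X b J) := by
  apply MeasurableSet.biInter (Finset.range (J+1)).countable_toSet
  intro i hi
  have : {ω | 1 ≤ X i ω ∧ X i ω < b} = (X i) ⁻¹' (Set.Ico 1 b) := rfl
  rw [this]
  exact measSet_X (by simpa using Nat.lt_succ_iff.1 (Finset.mem_range.1 hi)) _

lemma stayE_mono {b J J' : ℕ} (h : J ≤ J') : stayE X b J' ⊆ stayE X b J := by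
  intro ω hω
  simp only [stayE, Set.mem_iInter, Finset.mem_range] at hω ⊢
  intro i hi
  exact hω i (by omega)

lemma stay_decay (hC : IsBDChain P X k l r) {b : ℕ} (hb : 1 ≤ b) {δ : ℝ} (hδ : 0 < δ)
    (hδr : ∀ n, 1 ≤ n → n ≤ 2*b → δ ≤ r n) (m : ℕ) :
    P (stayE X b (m + b)) + ENNReal.ofReal (δ^b) * P (stayE X b m) ≤ P (stayE X b m) := by
  have hprob := hC.isProb
  set A := stayE X b m with hA
  have hAmeas : MeasurableSet[natFilt X m] A := stayE_meas b m
  have hAmeas' : MeasurableSet A := natFilt_le hC.meas m A hAmeas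
  set An : ℕ → Set Ω := fun n => A ∩ {ω | X m ω = n} with hAn
  set UpE : ℕ → Set Ω := fun n => An n ∩ ⋂ i ∈ Finset.range (b+1), {ω | X (m+i) ω = n+i}
    with hUpE
  have hAnmeas : ∀ n, MeasurableSet[natFilt X m] (An n) :=
    fun n => hAmeas.inter (measSet_X_eq le_rfl n)
  have hAnmeas' : ∀ n, MeasurableSet (An n) := fun n => natFilt_le hC.meas m _ (hAnmeas n)
  have hUpmeas' : ∀ n, MeasurableSet (UpE n) := by
    intro n
    apply (hAnmeas' n).inter
    apply MeasurableSet.biInter (Finset.range (b+1)).countable_toSet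
    intro i _
    exact hC.meas (m+i) (measurableSet_singleton _)
  -- up-run estimate
  have hup : ∀ n, 1 ≤ n → n < b → ENNReal.ofReal (δ^b) * P (An n) ≤ P (UpE n) := by
    intro n h1 h2
    rw [hUpE]
    rw [up_run hC m n h1 (hAnmeas n) (fun ω hω => hω.2) b]
    apply mul_le_mul_left
    calc ENNReal.ofReal (δ^b) = ∏ _i ∈ Finset.range b, ENNReal.ofReal δ := by
          rw [Finset.prod_const, Finset.card_range, ← ENNReal.ofReal_pow hδ.le]
      _ ≤ ∏ i ∈ Finset.range b, ENNReal.ofReal (r (n+i)) := by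
          apply Finset.prod_le_prod'
          intro i hi
          apply ENNReal.ofReal_le_ofReal
          exact hδr (n+i) (by omega) (by have := Finset.mem_range.1 hi; omega)
  -- partition of A
  have hApart : P A = ∑ n ∈ Finset.Ico 1 b, P (An n) := by
    rw [← measure_biUnion_finset]
    · congr 1
      ext ω
      simp only [Set.mem_iUnion, Finset.mem_Ico, hAn, Set.mem_inter_iff, Set.mem_setOf_eq]
      constructor
      · intro hω
        have hx : 1 ≤ X m ω ∧ X m ω < b := by
          have := hω
          simp only [hA, stayE, Set.mem_iInter, Finset.mem_range] at this
          exact this m (by omega)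
        exact ⟨X m ω, ⟨hx.1, hx.2⟩, hω, rfl⟩
      · rintro ⟨n, -, hω, -⟩; exact hω
    · intro n _ n' _ hnn'
      simp only [Set.disjoint_left, hAn]
      rintro ω ⟨-, h1⟩ ⟨-, h2⟩
      simp only [Set.mem_setOf_eq] at h1 h2
      exact hnn' (h1.symm.trans h2)
    · exact fun n _ => hAnmeas' n
  -- disjointness of UpE's
  have hUpdisj : (Finset.Ico 1 b : Set ℕ).PairwiseDisjoint UpE := by
    intro n _ n' _ hnn'
    simp only [Function.onFun, Set.disjoint_left, hUpE]
    rintro ω ⟨⟨-, h1⟩, -⟩ ⟨⟨-, h2⟩, -⟩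
    simp only [Set.mem_setOf_eq] at h1 h2
    exact hnn' (h1.symm.trans h2)
  -- Stay (m+b) disjoint from each UpE n (n ≥ 1)
  have hSdisj : ∀ n, 1 ≤ n → Disjoint (stayE X b (m+b)) (UpE n) := by
    intro n hn
    simp only [Set.disjoint_left]
    intro ω hs hu
    have h1 : X (m+b) ω < b := by
      simp only [stayE, Set.mem_iInter, Finset.mem_range] at hs
      exact (hs (m+b) (by omega)).2
    have h2 : X (m+b) ω = n + b := by
      simp only [hUpE, Set.mem_inter_iff, Set.mem_iInter, Finset.mem_range] at hu
      exact hu.2 b (by omega)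
    omega
  -- combine
  have hUsub : (stayE X b (m+b)) ∪ (⋃ n ∈ Finset.Ico 1 b, UpE n) ⊆ A := by
    apply Set.union_subset
    · exact stayE_mono (by omega)
    · intro ω hω
      simp only [Set.mem_iUnion] at hω
      obtain ⟨n, -, hω⟩ := hω
      exact hω.1.1
  have hdisjU : Disjoint (stayE X b (m+b)) (⋃ n ∈ Finset.Ico 1 b, UpE n) := by
    apply Set.disjoint_iUnion_right.2
    intro n
    apply Set.disjoint_iUnion_right.2
    intro hn
    exact hSdisj n (Finset.mem_Ico.1 hn).1
  calc P (stayE X b (m + b)) + ENNReal.ofReal (δ^b) * P A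
      ≤ P (stayE X b (m + b)) + ∑ n ∈ Finset.Ico 1 b, P (UpE n) := by
        refine add_le_add le_rfl ?_
        rw [hApart, Finset.mul_sum]
        apply Finset.sum_le_sum
        intro n hn
        exact hup n (Finset.mem_Ico.1 hn).1 (Finset.mem_Ico.1 hn).2
    _ = P (stayE X b (m + b)) + P (⋃ n ∈ Finset.Ico 1 b, UpE n) := by
        rw [measure_biUnion_finset hUpdisj (fun n _ => hUpmeas' n)]
    _ = P ((stayE X b (m+b)) ∪ (⋃ n ∈ Finset.Ico 1 b, UpE n)) := by
        rw [measure_union hdisjU]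
        exact MeasurableSet.biUnion (Finset.Ico 1 b).countable_toSet (fun n _ => hUpmeas' n)
    _ ≤ P A := measure_mono hUsub

lemma stay_zero (hC : IsBDChain P X k l r) {b : ℕ} (hb : 1 ≤ b) :
    P {ω | ∀ m, 1 ≤ X m ω ∧ X m ω < b} = 0 := by
  have hprob := hC.isProb
  have hne : (Finset.Icc 1 (2*b)).Nonempty := ⟨1, by simp; omega⟩
  set δ := (Finset.Icc 1 (2*b)).inf' hne r with hδdef
  have hδ : 0 < δ := by
    rw [hδdef, Finset.lt_inf'_iff]
    intro n hn
    exact hC.r_pos n (Finset.mem_Icc.1 hn).1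
  have hδr : ∀ n, 1 ≤ n → n ≤ 2*b → δ ≤ r n := by
    intro n h1 h2
    exact Finset.inf'_le r (Finset.mem_Icc.2 ⟨h1, h2⟩)
  have hδ1 : δ ≤ 1 := by
    have h1 : δ ≤ r 1 := hδr 1 le_rfl (by omega)
    have h2 := hC.l_pos 1 le_rfl
    have h3 := hC.lr_one 1 le_rfl
    linarith
  set d := ENNReal.ofReal (δ^b) with hd
  have hd0 : d ≠ 0 := by
    rw [hd]
    exact (ENNReal.ofReal_pos.2 (pow_pos hδ b)).ne'
  have hd1 : d ≤ 1 := by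
    rw [hd]
    exact ENNReal.ofReal_le_one.2 (pow_le_one₀ hδ.le hδ1)
  -- iteration
  have hiter : ∀ j : ℕ, P (stayE X b (j*b)) ≤ (1 - d)^j := by
    intro j
    induction j with
    | zero => simpa using prob_le_one
    | succ j ih =>
      have hdec := stay_decay hC hb hδ hδr (j*b)
      have h1 : P (stayE X b (j*b + b)) ≤ P (stayE X b (j*b)) - d * P (stayE X b (j*b)) := by
        exact ENNReal.le_sub_of_add_le_right (ENNReal.mul_ne_top ENNReal.ofReal_ne_top (measure_ne_top P _)) hdec
      have h2 : P (stayE X b (j*b)) - d * P (stayE X b (j*b)) = (1 - d) * P (stayE X b (j*b)) := by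
        rw [ENNReal.sub_mul (fun _ _ => measure_ne_top P _), one_mul]
      have h3 : (j+1)*b = j*b + b := by ring
      rw [h3]
      calc P (stayE X b (j*b + b)) ≤ (1 - d) * P (stayE X b (j*b)) := by rw [← h2]; exact h1
        _ ≤ (1 - d) * (1 - d)^j := mul_le_mul_right ih _
        _ = (1 - d)^(j+1) := by rw [pow_succ, mul_comm]
  have hsub : ∀ j : ℕ, {ω | ∀ m, 1 ≤ X m ω ∧ X m ω < b} ⊆ stayE X b (j*b) := by
    intro j ω hω
    simp only [stayE, Set.mem_iInter, Finset.mem_range]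
    intro i _
    exact hω i
  have hlim : Tendsto (fun j => (1 - d)^j) atTop (nhds 0) := by
    apply ENNReal.tendsto_pow_atTop_nhds_zero_of_lt_one
    exact ENNReal.sub_lt_self ENNReal.one_ne_top one_ne_zero hd0
  have hle : P {ω | ∀ m, 1 ≤ X m ω ∧ X m ω < b} ≤ 0 := by
    apply ge_of_tendsto' hlim
    intro j
    exact le_trans (measure_mono (hsub j)) (hiter j)
  exact le_antisymm hle zero_le
end confine


section hitting
variable {Ω : Type*} [MeasurableSpace Ω] {P : Measure Ω} {X : ℕ → Ω → ℕ} {k : ℕ} {l r : ℕ → ℝ}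

lemma hit0_top_iff (ω : Ω) : hit0 X ω = ⊤ ↔ ∀ m, X m ω ≠ 0 := by
  rw [hit0, hitTime, sInf_eq_top]
  constructor
  · intro h m hm
    exact (by simp : ((m:ℕ∞) ≠ ⊤)) (h (m : ℕ∞) ⟨m, by simpa using hm, rfl⟩)
  · intro h x hx
    obtain ⟨m, hm, rfl⟩ := hx
    exact absurd (by simpa using hm) (h m)

lemma hit0_attain {ω : Ω} {j : ℕ} (h : hit0 X ω = (j : ℕ∞)) : X j ω = 0 := by
  have hne : {m | X m ω ∈ ({0} : Set ℕ)}.Nonempty := by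
    by_contra hc
    rw [Set.not_nonempty_iff_eq_empty] at hc
    have : hit0 X ω = ⊤ := by
      rw [hit0, hitTime, hc]
      simp
    rw [h] at this
    exact (by simp : ((j:ℕ∞) ≠ ⊤)) this
  set M := {m | X m ω ∈ ({0} : Set ℕ)} with hM
  have hmem : sInf M ∈ M := Nat.sInf_mem hne
  have heq : hit0 X ω = ((sInf M : ℕ) : ℕ∞) := by
    rw [hit0, hitTime]
    apply le_antisymm
    · exact sInf_le ⟨sInf M, hmem, rfl⟩
    · apply le_sInf
      rintro x ⟨m, hm, rfl⟩
      show ((sInf M : ℕ) : ℕ∞) ≤ (m : ℕ∞)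
      exact_mod_cast Nat.sInf_le hm
  rw [h] at heq
  have : j = sInf M := by exact_mod_cast heq
  rw [this]
  exact hmem

lemma hit0_finite (hC : IsBDChain P X k l r) {c C : ℝ} (hc : 0 < c)
    (hcb : ∀ i, c ≤ tp l r i) (hCb : ∀ i, tp l r i ≤ C) :
    P {ω | hit0 X ω = ⊤} = 0 := by
  have hprob := hC.isProb
  by_contra hne
  set t := P {ω | hit0 X ω = ⊤} with ht
  have ht1 : t ≤ 1 := prob_le_one
  have htR : 0 < t.toReal := ENNReal.toReal_pos hne (lt_of_le_of_lt ht1 (by norm_num)).ne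
  -- choose b large
  obtain ⟨b, hbgt⟩ := exists_nat_gt (max 1 (xp l r k / (t.toReal * c)))
  have hb1 : 1 ≤ b := by
    have := le_max_left 1 (xp l r k / (t.toReal * c))
    have : (1:ℝ) < b := lt_of_le_of_lt this hbgt
    exact_mod_cast this.le
  -- t ≤ P(ever reach b) + P(stay in [1,b) forever)
  have hsplit : {ω | hit0 X ω = ⊤} ⊆
      {ω | ∃ j, b ≤ X j ω} ∪ {ω | ∀ m, 1 ≤ X m ω ∧ X m ω < b} := by
    intro ω hω
    rw [Set.mem_setOf_eq, hit0_top_iff] at hω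
    by_cases h : ∃ j, b ≤ X j ω
    · exact Or.inl h
    · push_neg at h
      exact Or.inr fun m => ⟨Nat.one_le_iff_ne_zero.2 (hω m), h m⟩
  have hb0 : ENNReal.ofReal (xp l r b) * t ≤ ENNReal.ofReal (xp l r k) := by
    calc ENNReal.ofReal (xp l r b) * t
        ≤ ENNReal.ofReal (xp l r b) *
            (P {ω | ∃ j, b ≤ X j ω} + P {ω | ∀ m, 1 ≤ X m ω ∧ X m ω < b}) := by
          apply mul_le_mul_right
          exact le_trans (measure_mono hsplit) (measure_union_le _ _)
      _ = ENNReal.ofReal (xp l r b) * P {ω | ∃ j, b ≤ X j ω} := by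
          rw [stay_zero hC hb1, add_zero]
      _ ≤ ENNReal.ofReal (xp l r k) := gambler_bound hC hCb b
  -- but xp b * t.toReal > xp k
  have hxpb : xp l r k < xp l r b * t.toReal := by
    have h1 : c * b ≤ xp l r b := by
      calc c * b = ∑ _i ∈ Finset.range b, c := by
            rw [Finset.sum_const, Finset.card_range, nsmul_eq_mul, mul_comm]
        _ ≤ xp l r b := Finset.sum_le_sum fun i _ => hcb i
    have h2 : xp l r k / (t.toReal * c) < b := lt_of_le_of_lt (le_max_right _ _) hbgt
    have h3 : xp l r k < b * (t.toReal * c) := by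
      rw [div_lt_iff₀ (by positivity)] at h2
      exact h2
    calc xp l r k < b * (t.toReal * c) := h3
      _ = (c * b) * t.toReal := by ring
      _ ≤ xp l r b * t.toReal := by
          apply mul_le_mul_of_nonneg_right h1 htR.le
  have hcontr : ENNReal.ofReal (xp l r k) < ENNReal.ofReal (xp l r b) * t := by
    calc ENNReal.ofReal (xp l r k) < ENNReal.ofReal (xp l r b * t.toReal) := by
          apply ENNReal.ofReal_lt_ofReal_iff_of_nonneg (xp_nonneg hC.l_pos hC.r_pos k) |>.2 hxpb
      _ = ENNReal.ofReal (xp l r b) * ENNReal.ofReal (t.toReal) :=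
          ENNReal.ofReal_mul (xp_nonneg hC.l_pos hC.r_pos b)
      _ = ENNReal.ofReal (xp l r b) * t := by
          rw [ENNReal.ofReal_toReal (lt_of_le_of_lt ht1 (by norm_num)).ne]
  exact absurd hb0 (not_le.2 hcontr)
end hitting
section pm
variable {Ω : Type*} [MeasurableSpace Ω] {P : Measure Ω} {X : ℕ → Ω → ℕ} {k : ℕ} {l r : ℕ → ℝ}

lemma eventually_eq_of_tendsto_enat {T : ℕ → Ω → ℕ} {ω : Ω} {j : ℕ}
    (h : Tendsto (fun m => (T m ω : ℕ∞)) atTop (nhds (j : ℕ∞))) :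
    ∀ᶠ m in atTop, T m ω = j := by
  rcases Nat.eq_zero_or_pos j with rfl | hj
  · have h1 : ∀ᶠ m in atTop, (T m ω : ℕ∞) < ((1:ℕ) : ℕ∞) := by
      apply h.eventually_lt_const
      exact_mod_cast Nat.zero_lt_one
    filter_upwards [h1] with m hm
    have : T m ω < 1 := by exact_mod_cast hm
    omega
  · obtain ⟨i, rfl⟩ : ∃ i, j = i + 1 := ⟨j - 1, by omega⟩
    have h1 : ∀ᶠ m in atTop, (T m ω : ℕ∞) < ((i + 2 : ℕ) : ℕ∞) := by
      apply h.eventually_lt_const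
      exact_mod_cast (by omega : i + 1 < i + 2)
    have h2 : ∀ᶠ m in atTop, ((i : ℕ) : ℕ∞) < (T m ω : ℕ∞) := by
      apply h.eventually_const_lt
      exact_mod_cast (by omega : i < i + 1)
    filter_upwards [h1, h2] with m hm1 hm2
    have ha : T m ω < i + 2 := by exact_mod_cast hm1
    have hb : i < T m ω := by exact_mod_cast hm2
    omega

lemma pm_tendsto (hC : IsBDChain P X k l r) (hfin : P {ω | hit0 X ω = ⊤} = 0)
    (T : ℕ → Ω → ℕ) (hstop : ∀ m, IsBDStop X (T m))
    (hconv : ∀ᵐ ω ∂P, Tendsto (fun m => (T m ω : ℕ∞)) atTop (nhds (hit0 X ω))) :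
    Tendsto (fun m => P {ω | 1 ≤ X (T m ω) ω}) atTop (nhds 0) := by
  have hprob := hC.isProb
  set s : ℕ → Set Ω := fun m => {ω | 1 ≤ X (T m ω) ω} with hs
  have hsm : ∀ m, MeasurableSet (s m) := by
    intro m
    have : s m = (fun ω => X (T m ω) ω) ⁻¹' (Set.Ici 1) := rfl
    rw [this]
    exact meas_X_T hC.meas (meas_T hC.meas (hstop m)) measurableSet_Ici
  have hPs : ∀ m, P (s m) = ∫⁻ ω, (s m).indicator 1 ω ∂P :=
    fun m => (lintegral_indicator_one (hsm m)).symm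
  have hae : ∀ᵐ ω ∂P, hit0 X ω ≠ ⊤ := by
    have := measure_eq_zero_iff_ae_notMem.1 hfin
    filter_upwards [this] with ω hω
    exact hω
  have key := tendsto_lintegral_of_dominated_convergence
    (μ := P)
    (F := fun m ω => (s m).indicator (1 : Ω → ℝ≥0∞) ω)
    (f := fun _ => 0)
    (bound := fun _ => 1)
    (fun m => measurable_const.indicator (hsm m))
    (by
      intro m
      apply ae_of_all
      intro ω
      by_cases hω : ω ∈ s m <;> simp [hω])
    (by
      rw [lintegral_const, measure_univ, mul_one]
      exact ENNReal.one_ne_top)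
    (by
      filter_upwards [hconv, hae] with ω hc hne
      obtain ⟨j, hj⟩ := WithTop.ne_top_iff_exists.1 hne
      rw [← hj] at hc
      have hXj : X j ω = 0 := hit0_attain hj.symm
      have hev : ∀ᶠ m in atTop, (s m).indicator (1 : Ω → ℝ≥0∞) ω = 0 := by
        filter_upwards [eventually_eq_of_tendsto_enat hc] with m hTm
        have hns : ω ∉ s m := by
          simp only [hs, Set.mem_setOf_eq, hTm, hXj]
          omega
        simp [hns]
      exact Filter.Tendsto.congr' (Filter.EventuallyEq.symm (by exact hev : (fun n => (s n).indicator (1 : Ω → ℝ≥0∞) ω) =ᶠ[atTop] fun _ => 0)) tendsto_const_nhds)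
  simp only [lintegral_zero] at key
  apply key.congr
  intro m
  show (∫⁻ ω, (s m).indicator 1 ω ∂P) = P {ω | 1 ≤ X (T m ω) ω}
  exact lintegral_indicator_one (hsm m)

lemma real_limit {a q : ℕ → ℝ} {xpk tinf Amax : ℝ} (htinf : 0 < tinf)
    (hA : ∀ m, 0 ≤ a m ∧ a m ≤ Amax)
    (hq : Tendsto q atTop (nhds 0)) (hq0 : ∀ m, 0 ≤ q m)
    (key : ∀ ε, 0 < ε → ∃ B, 0 ≤ B ∧ ∀ m, |tinf * a m - xpk| ≤ B * q m + ε * a m) :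
    Tendsto a atTop (nhds (xpk / tinf)) := by
  have hAmax : 0 ≤ Amax := le_trans (hA 0).1 (hA 0).2
  rw [Metric.tendsto_atTop]
  intro η hη
  set ε := (η * tinf / 2) / (Amax + 1) with hεdef
  have hε : 0 < ε := by positivity
  obtain ⟨B, hB0, hB⟩ := key ε hε
  have hq' : ∀ᶠ m in atTop, |q m - 0| < (η * tinf / 2) / (B + 1) := by
    have := Metric.tendsto_atTop.1 hq ((η * tinf / 2) / (B + 1)) (by positivity)
    simpa [Real.dist_eq] using this
  obtain ⟨N, hN⟩ := eventually_atTop.1 hq'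
  refine ⟨N, fun m hm => ?_⟩
  have h1 : |tinf * a m - xpk| ≤ B * q m + ε * a m := hB m
  have h2 : q m < (η * tinf / 2) / (B + 1) := by
    have := hN m hm
    rwa [sub_zero, abs_of_nonneg (hq0 m)] at this
  have h3 : B * q m < η * tinf / 2 := by
    calc B * q m ≤ B * ((η * tinf / 2) / (B + 1)) :=
          mul_le_mul_of_nonneg_left h2.le hB0
      _ < η * tinf / 2 := by
          rw [mul_div_assoc']
          rw [div_lt_iff₀ (by positivity)]
          nlinarith
  have h4 : ε * a m ≤ η * tinf / 2 := by
    calc ε * a m ≤ ε * Amax := mul_le_mul_of_nonneg_left (hA m).2 hε.le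
      _ ≤ η * tinf / 2 := by
          rw [hεdef, div_mul_eq_mul_div, div_le_iff₀ (by positivity)]
          nlinarith
  have h5 : |tinf * a m - xpk| < η * tinf := by
    calc |tinf * a m - xpk| ≤ B * q m + ε * a m := h1
      _ < η * tinf / 2 + η * tinf / 2 := by linarith
      _ = η * tinf := by ring
  rw [Real.dist_eq]
  have he : a m - xpk / tinf = (tinf * a m - xpk) / tinf := by
    field_simp
  rw [he, abs_div, abs_of_pos htinf, div_lt_iff₀ htinf]
  exact h5
end pm
section final
variable {Ω : Type*} [MeasurableSpace Ω] {P : Measure Ω} {X : ℕ → Ω → ℕ} {k : ℕ} {l r : ℕ → ℝ}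

lemma ofReal_mul_natCast {x : ℝ} (h : 0 ≤ x) (n : ℕ) :
    ENNReal.ofReal (x * n) = ENNReal.ofReal x * n := by
  rw [ENNReal.ofReal_mul h, ENNReal.ofReal_natCast]

lemma pt_bound {B ε tinf xpn : ℝ} (hB : 0 ≤ B) (hε : 0 ≤ ε) (htinf : 0 ≤ tinf) (n : ℕ)
    (h : tinf * n ≤ xpn + (B * (if 1 ≤ n then 1 else 0) + ε * n)) :
    ENNReal.ofReal tinf * (n : ℝ≥0∞)
      ≤ ENNReal.ofReal xpn + (ENNReal.ofReal B * (if 1 ≤ n then (1:ℝ≥0∞) else 0)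
          + ENNReal.ofReal ε * (n : ℝ≥0∞)) := by
  have e1 : ENNReal.ofReal (B * (if 1 ≤ n then (1:ℝ) else 0))
      = ENNReal.ofReal B * (if 1 ≤ n then (1:ℝ≥0∞) else 0) := by
    by_cases hn : 1 ≤ n <;> simp [hn]
  calc ENNReal.ofReal tinf * (n : ℝ≥0∞) = ENNReal.ofReal (tinf * n) :=
        (ofReal_mul_natCast htinf n).symm
    _ ≤ ENNReal.ofReal (xpn + (B * (if 1 ≤ n then 1 else 0) + ε * n)) :=
        ENNReal.ofReal_le_ofReal h
    _ ≤ ENNReal.ofReal xpn + ENNReal.ofReal (B * (if 1 ≤ n then 1 else 0) + ε * n) :=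
        ENNReal.ofReal_add_le
    _ ≤ ENNReal.ofReal xpn + (ENNReal.ofReal (B * (if 1 ≤ n then 1 else 0))
          + ENNReal.ofReal (ε * n)) := add_le_add le_rfl ENNReal.ofReal_add_le
    _ = ENNReal.ofReal xpn + (ENNReal.ofReal B * (if 1 ≤ n then (1:ℝ≥0∞) else 0)
          + ENNReal.ofReal ε * (n:ℝ≥0∞)) := by rw [e1, ofReal_mul_natCast hε]

theorem stmt0' {Ω : Type*} [MeasurableSpace Ω] (P : Measure Ω) (X : ℕ → Ω → ℕ)
    (k : ℕ) (l r : ℕ → ℝ) (hC : IsBDChain P X k l r)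
    (tinf : ℝ) (htpos : 0 < tinf) (htlim : Tendsto (tp l r) atTop (nhds tinf))
    (T : ℕ → Ω → ℕ) (hstop : ∀ m, IsBDStop X (T m))
    (hmono : ∀ ω, Monotone fun m => T m ω)
    (hint : ∀ m, ∫⁻ ω, (T m ω : ℝ≥0∞) ∂P < ⊤)
    (hconv : ∀ᵐ ω ∂P, Tendsto (fun m => (T m ω : ℕ∞)) atTop (nhds (hit0 X ω))) :
    Tendsto (fun m => ∫⁻ ω, (X (T m ω) ω : ℝ≥0∞) ∂P) atTop
      (nhds (ENNReal.ofReal (xp l r k / tinf))) := by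
  have hprob := hC.isProb
  obtain ⟨c, C, hc, hbnds⟩ := seq_bounds (tp l r) tinf htpos htlim (tp_pos hC.l_pos hC.r_pos)
  have hcb : ∀ i, c ≤ tp l r i := fun i => (hbnds i).1
  have hCb : ∀ i, tp l r i ≤ C := fun i => (hbnds i).2
  have hfin : P {ω | hit0 X ω = ⊤} = 0 := hit0_finite hC hc hcb hCb
  have hxpk0 : 0 ≤ xp l r k := xp_nonneg hC.l_pos hC.r_pos k
  have hXme : ∀ m, Measurable fun ω => (X (T m ω) ω : ℝ≥0∞) := fun m =>
    (measurable_of_countable (fun n : ℕ => (n : ℝ≥0∞))).comp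
      (meas_X_T hC.meas (meas_T hC.meas (hstop m)))
  have hxpme : ∀ m, Measurable fun ω => ENNReal.ofReal (xp l r (X (T m ω) ω)) := fun m =>
    (measurable_of_countable (fun n : ℕ => ENNReal.ofReal (xp l r n))).comp
      (meas_X_T hC.meas (meas_T hC.meas (hstop m)))
  set g : ℕ → ℝ≥0∞ := fun m => ∫⁻ ω, (X (T m ω) ω : ℝ≥0∞) ∂P with hg
  have host : ∀ m, ∫⁻ ω, ENNReal.ofReal (xp l r (X (T m ω) ω)) ∂P
      = ENNReal.ofReal (xp l r k) := fun m => ost hC (hstop m) (hint m).ne hCb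
  have hcxp : ∀ n : ℕ, c * n ≤ xp l r n := by
    intro n
    calc c * n = ∑ _i ∈ Finset.range n, c := by
          rw [Finset.sum_const, Finset.card_range, nsmul_eq_mul, mul_comm]
      _ ≤ xp l r n := Finset.sum_le_sum fun i _ => hcb i
  have hgle : ∀ m, ENNReal.ofReal c * g m ≤ ENNReal.ofReal (xp l r k) := by
    intro m
    rw [hg, ← lintegral_const_mul _ (hXme m), ← host m]
    apply lintegral_mono
    intro ω
    calc ENNReal.ofReal c * (X (T m ω) ω : ℝ≥0∞)
        = ENNReal.ofReal (c * (X (T m ω) ω : ℕ)) := (ofReal_mul_natCast hc.le _).symm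
      _ ≤ ENNReal.ofReal (xp l r (X (T m ω) ω)) :=
          ENNReal.ofReal_le_ofReal (hcxp _)
  have hc0 : ENNReal.ofReal c ≠ 0 := (ENNReal.ofReal_pos.2 hc).ne'
  have hgfin : ∀ m, g m ≠ ⊤ := by
    intro m h
    have := hgle m
    rw [h, ENNReal.mul_top hc0] at this
    exact (lt_of_le_of_lt this ENNReal.ofReal_lt_top).ne rfl
  set Amax : ℝ≥0∞ := ENNReal.ofReal (xp l r k) / ENNReal.ofReal c with hAmax
  have hAfin : Amax ≠ ⊤ :=
    (ENNReal.div_lt_top ENNReal.ofReal_ne_top hc0).ne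
  have hgA : ∀ m, g m ≤ Amax := by
    intro m
    rw [hAmax, ENNReal.le_div_iff_mul_le (Or.inl hc0) (Or.inl ENNReal.ofReal_ne_top)]
    rw [mul_comm]
    exact hgle m
  set a : ℕ → ℝ := fun m => (g m).toReal with ha
  set p : ℕ → ℝ≥0∞ := fun m => P {ω | 1 ≤ X (T m ω) ω} with hp
  have hpfin : ∀ m, p m ≠ ⊤ := fun m => measure_ne_top P _
  set q : ℕ → ℝ := fun m => (p m).toReal with hq
  have hptend := pm_tendsto hC hfin T hstop hconv
  have hqtend : Tendsto q atTop (nhds 0) := by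
    have h2 := (ENNReal.tendsto_toReal (ENNReal.zero_ne_top)).comp hptend
    rw [ENNReal.toReal_zero] at h2
    exact h2
  have hq0 : ∀ m, 0 ≤ q m := fun m => ENNReal.toReal_nonneg
  -- the family of inequalities
  have key : ∀ ε : ℝ, 0 < ε → ∃ B, 0 ≤ B ∧ ∀ m, |tinf * a m - xp l r k| ≤ B * q m + ε * a m := by
    intro ε hε
    have hu : Tendsto (fun i => tp l r i - tinf) atTop (nhds 0) := by
      have := htlim.sub (tendsto_const_nhds (x := tinf))
      simpa using this
    obtain ⟨B, hB0, hB⟩ := sum_approx _ ε hε hu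
    have habs : ∀ n : ℕ, |xp l r n - tinf * n| ≤ B * (if 1 ≤ n then 1 else 0) + ε * n := by
      intro n
      have h1 := hB n
      have hsum : ∑ i ∈ Finset.range n, (tp l r i - tinf) = xp l r n - tinf * n := by
        rw [Finset.sum_sub_distrib, Finset.sum_const, Finset.card_range, nsmul_eq_mul]
        rw [xp, mul_comm]
      rwa [hsum] at h1
    refine ⟨B, hB0, fun m => ?_⟩
    -- set up the indicator
    set sm : Set Ω := {ω | 1 ≤ X (T m ω) ω} with hsm
    have hsmeas : MeasurableSet sm := by
      have : sm = (fun ω => X (T m ω) ω) ⁻¹' (Set.Ici 1) := rfl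
      rw [this]
      exact meas_X_T hC.meas (meas_T hC.meas (hstop m)) measurableSet_Ici
    have hindm : Measurable (sm.indicator (1 : Ω → ℝ≥0∞)) := measurable_const.indicator hsmeas
    have hind_eq : ∀ ω, sm.indicator (1 : Ω → ℝ≥0∞) ω
        = (if 1 ≤ X (T m ω) ω then (1:ℝ≥0∞) else 0) := by
      intro ω
      by_cases hω : ω ∈ sm
      · rw [Set.indicator_of_mem hω]
        simp only [hsm, Set.mem_setOf_eq] at hω
        simp [hω]
      · rw [Set.indicator_of_notMem hω]
        simp only [hsm, Set.mem_setOf_eq] at hω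
        simp [hω]
    -- the integral of the RHS pieces
    have hRHS : ∫⁻ ω, (ENNReal.ofReal B * sm.indicator (1 : Ω → ℝ≥0∞) ω
          + ENNReal.ofReal ε * (X (T m ω) ω : ℝ≥0∞)) ∂P
        = ENNReal.ofReal B * p m + ENNReal.ofReal ε * g m := by
      rw [lintegral_add_left (hindm.const_mul _)]
      rw [lintegral_const_mul _ hindm, lintegral_const_mul _ (hXme m)]
      rw [lintegral_indicator_one hsmeas]
    -- integrated inequality (a)
    have hintA : ENNReal.ofReal tinf * g m
        ≤ ENNReal.ofReal (xp l r k) + (ENNReal.ofReal B * p m + ENNReal.ofReal ε * g m) := by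
      rw [hg, ← lintegral_const_mul _ (hXme m), ← host m, ← hRHS,
        ← lintegral_add_left (hxpme m)]
      apply lintegral_mono
      intro ω
      dsimp only
      rw [hind_eq ω]
      apply pt_bound hB0 hε.le htpos.le
      have := habs (X (T m ω) ω)
      rw [abs_le] at this
      linarith [this.1]
    -- integrated inequality (b)
    have hintB : ENNReal.ofReal (xp l r k)
        ≤ ENNReal.ofReal tinf * g m + (ENNReal.ofReal B * p m + ENNReal.ofReal ε * g m) := by
      rw [hg, ← lintegral_const_mul _ (hXme m), ← host m, ← hRHS,
        ← lintegral_add_left ((hXme m).const_mul _)]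
      apply lintegral_mono
      intro ω
      dsimp only
      rw [hind_eq ω]
      -- pointwise : ofReal (xp n) ≤ ofReal tinf * n + (ofReal B * ind + ofReal ε * n)
      set n := X (T m ω) ω with hn
      have hreal : xp l r n ≤ tinf * n + (B * (if 1 ≤ n then 1 else 0) + ε * n) := by
        have := habs n
        rw [abs_le] at this
        linarith [this.2]
      calc ENNReal.ofReal (xp l r n)
          ≤ ENNReal.ofReal (tinf * n + (B * (if 1 ≤ n then 1 else 0) + ε * n)) :=
            ENNReal.ofReal_le_ofReal hreal
        _ ≤ ENNReal.ofReal (tinf * n) + ENNReal.ofReal (B * (if 1 ≤ n then 1 else 0) + ε * n) :=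
            ENNReal.ofReal_add_le
        _ ≤ ENNReal.ofReal (tinf * n) + (ENNReal.ofReal (B * (if 1 ≤ n then 1 else 0))
              + ENNReal.ofReal (ε * n)) := add_le_add le_rfl ENNReal.ofReal_add_le
        _ = ENNReal.ofReal tinf * (n : ℝ≥0∞) + (ENNReal.ofReal B * (if 1 ≤ n then (1:ℝ≥0∞) else 0)
              + ENNReal.ofReal ε * (n : ℝ≥0∞)) := by
            rw [ofReal_mul_natCast htpos.le, ofReal_mul_natCast hε.le]
            congr 2
            by_cases hn1 : 1 ≤ n <;> simp [hn1]
    -- convert to real inequalities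
    have hfin1 : ENNReal.ofReal B * p m ≠ ⊤ :=
      ENNReal.mul_ne_top ENNReal.ofReal_ne_top (hpfin m)
    have hfin2 : ENNReal.ofReal ε * g m ≠ ⊤ :=
      ENNReal.mul_ne_top ENNReal.ofReal_ne_top (hgfin m)
    have hfin3 : ENNReal.ofReal tinf * g m ≠ ⊤ :=
      ENNReal.mul_ne_top ENNReal.ofReal_ne_top (hgfin m)
    have hA' : (ENNReal.ofReal tinf * g m).toReal = tinf * a m := by
      rw [ENNReal.toReal_mul, ENNReal.toReal_ofReal htpos.le]
    have hB' : (ENNReal.ofReal B * p m).toReal = B * q m := by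
      rw [ENNReal.toReal_mul, ENNReal.toReal_ofReal hB0]
    have hE' : (ENNReal.ofReal ε * g m).toReal = ε * a m := by
      rw [ENNReal.toReal_mul, ENNReal.toReal_ofReal hε.le]
    have hrealA : tinf * a m ≤ xp l r k + (B * q m + ε * a m) := by
      have := ENNReal.toReal_mono (by
        exact ENNReal.add_ne_top.2 ⟨ENNReal.ofReal_ne_top, ENNReal.add_ne_top.2 ⟨hfin1, hfin2⟩⟩)
        hintA
      rwa [hA', ENNReal.toReal_add ENNReal.ofReal_ne_top (ENNReal.add_ne_top.2 ⟨hfin1, hfin2⟩),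
        ENNReal.toReal_add hfin1 hfin2, hB', hE', ENNReal.toReal_ofReal hxpk0] at this
    have hrealB : xp l r k ≤ tinf * a m + (B * q m + ε * a m) := by
      have := ENNReal.toReal_mono (by
        exact ENNReal.add_ne_top.2 ⟨hfin3, ENNReal.add_ne_top.2 ⟨hfin1, hfin2⟩⟩)
        hintB
      rwa [ENNReal.toReal_ofReal hxpk0,
        ENNReal.toReal_add hfin3 (ENNReal.add_ne_top.2 ⟨hfin1, hfin2⟩),
        ENNReal.toReal_add hfin1 hfin2, hA', hB', hE'] at this
    rw [abs_le]
    constructor <;> [linarith [hrealB]; linarith [hrealA]]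
  -- apply the real limit lemma
  have hAreal : ∀ m, 0 ≤ a m ∧ a m ≤ Amax.toReal := by
    intro m
    exact ⟨ENNReal.toReal_nonneg, ENNReal.toReal_mono hAfin (hgA m)⟩
  have haTend : Tendsto a atTop (nhds (xp l r k / tinf)) :=
    real_limit htpos hAreal hqtend hq0 key
  have hgof : ∀ m, g m = ENNReal.ofReal (a m) := by
    intro m
    rw [ha, ENNReal.ofReal_toReal (hgfin m)]
  have : Tendsto (fun m => ENNReal.ofReal (a m)) atTop
      (nhds (ENNReal.ofReal (xp l r k / tinf))) :=
    ENNReal.tendsto_ofReal haTend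
  exact this.congr (fun m => (hgof m).symm)
end final
end AUX

/-- If `t_∞ = lim_n t_n` exists and lies in `(0,∞)`, then for any
non-decreasing sequence of stopping times `T_m` with `E[T_m] < ∞` and `T_m → T_∂` a.s.,
`E[X_{T_m}] → x_k / t_∞ = (1 + l_1/r_1 + ⋯ + (l_1⋯l_{k-1})/(r_1⋯r_{k-1})) / t_∞`. -/
theorem stmt0 {Ω : Type*} [MeasurableSpace Ω] (P : Measure Ω) (X : ℕ → Ω → ℕ)
    (k : ℕ) (l r : ℕ → ℝ) (hC : IsBDChain P X k l r)
    (tinf : ℝ) (htpos : 0 < tinf) (htlim : Tendsto (tp l r) atTop (nhds tinf))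
    (T : ℕ → Ω → ℕ) (hstop : ∀ m, IsBDStop X (T m))
    (hmono : ∀ ω, Monotone fun m => T m ω)
    (hint : ∀ m, ∫⁻ ω, (T m ω : ℝ≥0∞) ∂P < ⊤)
    (hconv : ∀ᵐ ω ∂P, Tendsto (fun m => (T m ω : ℕ∞)) atTop (nhds (hit0 X ω))) :
    Tendsto (fun m => ∫⁻ ω, (X (T m ω) ω : ℝ≥0∞) ∂P) atTop
      (nhds (ENNReal.ofReal (xp l r k / tinf))) := by
  exact stmt0' P X k l r hC tinf htpos htlim T hstop hmono hint hconv
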